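/- For every ε > 0 there exists a 4-free set S of positive integers whose upper density is greater than 1 − ε. Consequently α(4) = sup{upper density of S : S is 4-free} = 1. -/

import Mathlib

open Filter

/-- `f : ℕ → ℕ` is a (bijective) enumeration of the set `S`. -/
def IsPermOf (f : ℕ → ℕ) (S : Set ℕ) : Prop :=
  Function.Injective f ∧ Set.range f = S

/-- A set `S` of naturals is 4-free if some enumeration of `S` contains no
4-term arithmetic progression (with nonzero, possibly negative, common
difference) as a subsequence. -/
def FourFree (S : Set ℕ) : Prop :=
  ∃ f : ℕ → ℕ, IsPermOf f S ∧
    ¬ ∃ i₁ i₂ i₃ i₄ : ℕ, i₁ < i₂ ∧ i₂ < i₃ ∧ i₃ < i₄ ∧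
      ((f i₂ : ℤ) - (f i₁ : ℤ) = (f i₃ : ℤ) - (f i₂ : ℤ)) ∧
      ((f i₃ : ℤ) - (f i₂ : ℤ) = (f i₄ : ℤ) - (f i₃ : ℤ)) ∧
      f i₁ ≠ f i₂

/-- The upper density `limsup |S ∩ [1, n]| / n` of a set of naturals. -/
noncomputable def upperDensity (S : Set ℕ) : ℝ :=
  limsup (fun n : ℕ => (Nat.card ↥(S ∩ Set.Icc 1 n) : ℝ) / n) atTop

/-! ### Bit reversal and 3-AP-free orderings of `{0, ..., 2^m - 1}` -/

/-- bit-reversal of `v` within `m` bits. -/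
def rev : ℕ → ℕ → ℕ
  | 0, _ => 0
  | m+1, v => (v % 2) * 2^m + rev m (v / 2)

lemma rev_lt : ∀ m v, v < 2^m → rev m v < 2^m := by
  intro m
  induction m with
  | zero => intro v hv; simpa [rev] using hv
  | succ m ih =>
    intro v hv
    have hp : (2:ℕ)^(m+1) = 2 * 2^m := by ring
    have h2 : v / 2 < 2^m := by omega
    have h3 := ih (v / 2) h2
    have hm2 : v % 2 < 2 := Nat.mod_lt _ (by norm_num)
    show (v % 2) * 2^m + rev m (v / 2) < 2^(m+1)
    nlinarith [h3, hm2]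

lemma rev_high : ∀ m v, v < 2^(m+1) → rev (m+1) v = 2 * rev m (v % 2^m) + v / 2^m := by
  intro m
  induction m with
  | zero =>
    intro v hv
    interval_cases v <;> simp [rev]
  | succ m ih =>
    intro v hv
    have hp : (2:ℕ)^(m+2) = 2 * 2^(m+1) := by ring
    have h2 : v / 2 < 2^(m+1) := by omega
    have key := ih (v / 2) h2
    have e1 : rev (m+2) v = (v % 2) * 2^(m+1) + rev (m+1) (v / 2) := rfl
    have e2 : rev (m+2) v = (v % 2) * 2^(m+1) + 2 * rev m ((v / 2) % 2^m) + (v / 2) / 2^m := by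
      rw [e1, key]; ring
    have e3 : (v % 2^(m+1)) % 2 = v % 2 := Nat.mod_mod_of_dvd v ⟨2^m, by ring⟩
    have e4 : (v % 2^(m+1)) / 2 = (v / 2) % 2^m := by
      have h : (2:ℕ)^(m+1) = 2 * 2^m := by ring
      rw [h, Nat.mod_mul_right_div_self]
    have e5 : (v / 2) / 2^m = v / 2^(m+1) := by
      rw [Nat.div_div_eq_div_mul]; congr 1; ring
    have e6 : rev (m+1) (v % 2^(m+1)) = (v % 2) * 2^m + rev m ((v / 2) % 2^m) := by
      show (v % 2^(m+1)) % 2 * 2^m + rev m ((v % 2^(m+1)) / 2) = _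
      rw [e3, e4]
    rw [e2, e5, e6]; ring

lemma rev_rev : ∀ m v, v < 2^m → rev m (rev m v) = v := by
  intro m
  induction m with
  | zero => intro v hv; interval_cases v; rfl
  | succ m ih =>
    intro v hv
    have hp : (2:ℕ)^(m+1) = 2 * 2^m := by ring
    have h2 : v / 2 < 2^m := by omega
    have hrl : rev m (v / 2) < 2^m := rev_lt m _ h2
    have e1 : rev (m+1) v = (v % 2) * 2^m + rev m (v / 2) := rfl
    have hw : rev (m+1) v < 2^(m+1) := rev_lt (m+1) v hv
    rw [rev_high m _ hw, e1]
    have e2 : ((v % 2) * 2^m + rev m (v / 2)) % 2^m = rev m (v / 2) := by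
      rw [Nat.add_comm, Nat.add_mul_mod_self_right, Nat.mod_eq_of_lt hrl]
    have e3 : ((v % 2) * 2^m + rev m (v / 2)) / 2^m = v % 2 := by
      rw [Nat.add_comm, Nat.add_mul_div_right _ _ (by positivity : 0 < 2^m),
        Nat.div_eq_of_lt hrl]
      omega
    rw [e2, e3, ih _ h2]
    omega

/-- the bit-reversal ordering of `{0, ..., 2^m - 1}` has no increasing 3-term
arithmetic progression. -/
lemma noAP3 : ∀ m : ℕ, ∀ v1 v2 v3 : ℕ, v1 < 2^m → v2 < 2^m → v3 < 2^m →
    (v2 : ℤ) - v1 = (v3 : ℤ) - v2 → v1 ≠ v2 →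
    rev m v1 < rev m v2 → rev m v2 < rev m v3 → False := by
  intro m
  induction m with
  | zero =>
    intro v1 v2 v3 h1 h2 h3 _ hne _ _
    interval_cases v1 <;> interval_cases v2 <;> simp at hne
  | succ m ih =>
    intro v1 v2 v3 h1 h2 h3 hap hne h12 h23
    have hp : (2:ℕ)^(m+1) = 2 * 2^m := by ring
    have e1 : rev (m+1) v1 = (v1 % 2) * 2^m + rev m (v1 / 2) := rfl
    have e2 : rev (m+1) v2 = (v2 % 2) * 2^m + rev m (v2 / 2) := rfl
    have e3 : rev (m+1) v3 = (v3 % 2) * 2^m + rev m (v3 / 2) := rfl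
    have r1 : rev m (v1 / 2) < 2^m := rev_lt m _ (by omega)
    have r2 : rev m (v2 / 2) < 2^m := rev_lt m _ (by omega)
    have r3 : rev m (v3 / 2) < 2^m := rev_lt m _ (by omega)
    have hsum : v1 + v3 = 2 * v2 := by omega
    by_cases ha : v1 % 2 = v2 % 2
    · have ha3 : v3 % 2 = v1 % 2 := by omega
      have hq : ((v2 / 2 : ℕ) : ℤ) - (v1 / 2 : ℕ) = ((v3 / 2 : ℕ) : ℤ) - (v2 / 2 : ℕ) := by
        omega
      have hqne : v1 / 2 ≠ v2 / 2 := by omega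
      have h12' : rev m (v1 / 2) < rev m (v2 / 2) := by
        rw [e1, e2, ha] at h12; omega
      have h23' : rev m (v2 / 2) < rev m (v3 / 2) := by
        rw [e2, e3] at h23
        have : v2 % 2 = v3 % 2 := by omega
        rw [this] at h23; omega
      exact ih (v1 / 2) (v2 / 2) (v3 / 2) (by omega) (by omega) (by omega) hq hqne h12' h23'
    · have ha3 : v3 % 2 = v1 % 2 := by omega
      rw [e1, e2] at h12
      rw [e2, e3] at h23
      have ha1 : v1 % 2 = 0 ∨ v1 % 2 = 1 := by omega
      have ha2' : v2 % 2 = 0 ∨ v2 % 2 = 1 := by omega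
      rcases ha1 with h1' | h1' <;> rcases ha2' with h2' | h2'
      · exact ha (by omega)
      · have h3' : v3 % 2 = 0 := by omega
        rw [h1', h2'] at h12
        rw [h2', h3'] at h23
        simp only [zero_mul, one_mul, zero_add] at h12 h23
        omega
      · have h3' : v3 % 2 = 1 := by omega
        rw [h1', h2'] at h12
        rw [h2', h3'] at h23
        simp only [zero_mul, one_mul, zero_add] at h12 h23
        omega
      · exact ha (by omega)

/-! ### The blocks -/

/-- starts of the blocks -/
def cc : ℕ → ℕ
  | 0 => 1
  | k+1 => 3 * (cc k + 2 ^ ((k+1) * cc k))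

/-- exponent for the length of block `k` -/
def mE (k : ℕ) : ℕ := (k+1) * cc k

/-- length of block `k` -/
def Lb (k : ℕ) : ℕ := 2 ^ mE k

lemma cc_succ (k : ℕ) : cc (k+1) = 3 * (cc k + Lb k) := rfl

lemma Lb_pos (k : ℕ) : 1 ≤ Lb k := Nat.one_le_two_pow

lemma cc_pos (k : ℕ) : 1 ≤ cc k := by
  cases k with
  | zero => exact le_refl 1
  | succ k => rw [cc_succ]; have := Lb_pos k; have : 1 ≤ cc k + Lb k := by omega
              omega

lemma Lb_big (k : ℕ) : (k+1) * cc k < Lb k := Nat.lt_two_pow_self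

lemma cc_strictMono : StrictMono cc := by
  apply strictMono_nat_of_lt_succ
  intro k
  rw [cc_succ]
  have := Lb_pos k
  have := cc_pos k
  omega

lemma cc_ge (k : ℕ) : k + 1 ≤ cc k := by
  induction k with
  | zero => exact le_refl 1
  | succ k ih => rw [cc_succ]; have := Lb_pos k; omega

/-- for `j < k` the end of block `j` is at most the start of block `k`. -/
lemma end_le_start {j k : ℕ} (h : j < k) : cc j + Lb j ≤ cc k := by
  have h1 : cc j + Lb j ≤ cc (j+1) := by rw [cc_succ]; omega
  exact h1.trans (cc_strictMono.monotone h)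

/-- cumulative position offsets -/
def Pb : ℕ → ℕ
  | 0 => 0
  | k+1 => Pb k + Lb k

lemma Pb_succ (k : ℕ) : Pb (k+1) = Pb k + Lb k := rfl

lemma Pb_strictMono : StrictMono Pb := by
  apply strictMono_nat_of_lt_succ
  intro k
  rw [Pb_succ]
  have := Lb_pos k
  omega

lemma le_Pb (k : ℕ) : k ≤ Pb k := by
  induction k with
  | zero => exact le_refl 0
  | succ k ih => rw [Pb_succ]; have := Lb_pos k; omega

/-- index of the block containing position `n` -/
def bIdx (n : ℕ) : ℕ := Nat.findGreatest (fun k => Pb k ≤ n) n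

lemma bIdx_spec (n : ℕ) : Pb (bIdx n) ≤ n ∧ n < Pb (bIdx n + 1) := by
  constructor
  · exact Nat.findGreatest_spec (P := fun k => Pb k ≤ n) (m := 0) (Nat.zero_le n) (Nat.zero_le n)
  · by_cases h : bIdx n + 1 ≤ n
    · have hg : ¬ Pb (bIdx n + 1) ≤ n :=
        Nat.findGreatest_is_greatest (P := fun k => Pb k ≤ n)
          (by omega : bIdx n < bIdx n + 1) h
      omega
    · have h2 : n ≤ bIdx n := by omega
      have h3 := le_Pb (bIdx n + 1)
      omega

lemma bIdx_eq {k n : ℕ} (h1 : Pb k ≤ n) (h2 : n < Pb (k+1)) : bIdx n = k := by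
  have hkn : k ≤ n := (le_Pb k).trans h1
  rw [bIdx, Nat.findGreatest_eq_iff]
  refine ⟨hkn, fun _ => h1, fun j hj _ => ?_⟩
  have : Pb (k+1) ≤ Pb j := Pb_strictMono.monotone hj
  omega

lemma bIdx_mono : Monotone bIdx := by
  intro i j hij
  by_contra h
  push_neg at h
  have h1 := (bIdx_spec i).1
  have h2 := (bIdx_spec j).2
  have h3 : Pb (bIdx j + 1) ≤ Pb (bIdx i) := Pb_strictMono.monotone (by omega)
  omega

/-! ### The set `SS` and its enumeration `ff` -/

/-- the set: a union of blocks `[cc k, cc k + Lb k)` -/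
def SS : Set ℕ := ⋃ k, Set.Ico (cc k) (cc k + Lb k)

/-- the enumeration: blocks in order, each block in bit-reversal order -/
def ff (n : ℕ) : ℕ := cc (bIdx n) + rev (mE (bIdx n)) (n - Pb (bIdx n))

lemma ff_off_lt (n : ℕ) : n - Pb (bIdx n) < Lb (bIdx n) := by
  have h := bIdx_spec n
  have h2 : Pb (bIdx n + 1) = Pb (bIdx n) + Lb (bIdx n) := rfl
  omega

lemma ff_mem (n : ℕ) : cc (bIdx n) ≤ ff n ∧ ff n < cc (bIdx n) + Lb (bIdx n) := by
  have h : rev (mE (bIdx n)) (n - Pb (bIdx n)) < Lb (bIdx n) :=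
    rev_lt (mE (bIdx n)) _ (ff_off_lt n)
  unfold ff
  omega

lemma ff_perm : IsPermOf ff SS := by
  constructor
  · intro n1 n2 h
    have hm1 := ff_mem n1
    have hm2 := ff_mem n2
    have hk : bIdx n1 = bIdx n2 := by
      by_contra hne
      rcases Nat.lt_or_ge (bIdx n1) (bIdx n2) with hlt | hge
      · have := end_le_start hlt; omega
      · have hlt : bIdx n2 < bIdx n1 := by omega
        have := end_le_start hlt; omega
    have o1 : n1 - Pb (bIdx n2) < 2 ^ mE (bIdx n2) := by
      have h5 := ff_off_lt n1; rw [hk] at h5; exact h5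
    have o2 : n2 - Pb (bIdx n2) < 2 ^ mE (bIdx n2) := ff_off_lt n2
    have h' : rev (mE (bIdx n2)) (n1 - Pb (bIdx n2)) =
        rev (mE (bIdx n2)) (n2 - Pb (bIdx n2)) := by
      rw [ff, ff, hk] at h
      omega
    have i1 := rev_rev (mE (bIdx n2)) _ o1
    have i2 := rev_rev (mE (bIdx n2)) _ o2
    rw [h'] at i1
    rw [i2] at i1
    have s1 := bIdx_spec n1
    have s2 := bIdx_spec n2
    rw [hk] at s1
    omega
  · ext v
    simp only [Set.mem_range, SS, Set.mem_iUnion, Set.mem_Ico]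
    constructor
    · rintro ⟨n, rfl⟩
      exact ⟨bIdx n, (ff_mem n).1, (ff_mem n).2⟩
    · rintro ⟨k, hk1, hk2⟩
      refine ⟨Pb k + rev (mE k) (v - cc k), ?_⟩
      have hoff : v - cc k < 2 ^ mE k := by
        have h : Lb k = 2 ^ mE k := rfl
        omega
      have hrl : rev (mE k) (v - cc k) < Lb k := rev_lt _ _ hoff
      have hb : bIdx (Pb k + rev (mE k) (v - cc k)) = k := by
        apply bIdx_eq
        · omega
        · rw [Pb_succ]; omega
      rw [ff, hb]
      have h2 : Pb k + rev (mE k) (v - cc k) - Pb k = rev (mE k) (v - cc k) := by omega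
      rw [h2, rev_rev _ _ hoff]
      omega

/-! ### `ff` has no 4-term AP subsequence -/

/-- three values of `ff` in the same block with increasing positions can't form an AP -/
lemma no_inblock_AP {k i1 i2 i3 : ℕ} (hb1 : bIdx i1 = k) (hb2 : bIdx i2 = k)
    (hb3 : bIdx i3 = k) (h12 : i1 < i2) (h23 : i2 < i3)
    (hap : (ff i2 : ℤ) - ff i1 = (ff i3 : ℤ) - ff i2) (hne : ff i1 ≠ ff i2) : False := by
  have o1 : i1 - Pb k < 2 ^ mE k := by have := ff_off_lt i1; rw [hb1] at this; exact this
  have o2 : i2 - Pb k < 2 ^ mE k := by have := ff_off_lt i2; rw [hb2] at this; exact this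
  have o3 : i3 - Pb k < 2 ^ mE k := by have := ff_off_lt i3; rw [hb3] at this; exact this
  have s1 := bIdx_spec i1; rw [hb1] at s1
  have s2 := bIdx_spec i2; rw [hb2] at s2
  have s3 := bIdx_spec i3; rw [hb3] at s3
  have e1 : ff i1 = cc k + rev (mE k) (i1 - Pb k) := by rw [ff, hb1]
  have e2 : ff i2 = cc k + rev (mE k) (i2 - Pb k) := by rw [ff, hb2]
  have e3 : ff i3 = cc k + rev (mE k) (i3 - Pb k) := by rw [ff, hb3]
  refine noAP3 (mE k) (rev (mE k) (i1 - Pb k)) (rev (mE k) (i2 - Pb k))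
    (rev (mE k) (i3 - Pb k)) (rev_lt _ _ o1) (rev_lt _ _ o2) (rev_lt _ _ o3) ?_ ?_ ?_ ?_
  · rw [e1, e2, e3] at hap; push_cast at hap ⊢; omega
  · intro h; apply hne; rw [e1, e2, h]
  · rw [rev_rev _ _ o1, rev_rev _ _ o2]; omega
  · rw [rev_rev _ _ o2, rev_rev _ _ o3]; omega

theorem ff_noAP : ¬ ∃ i₁ i₂ i₃ i₄ : ℕ, i₁ < i₂ ∧ i₂ < i₃ ∧ i₃ < i₄ ∧
    ((ff i₂ : ℤ) - (ff i₁ : ℤ) = (ff i₃ : ℤ) - (ff i₂ : ℤ)) ∧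
    ((ff i₃ : ℤ) - (ff i₂ : ℤ) = (ff i₄ : ℤ) - (ff i₃ : ℤ)) ∧
    ff i₁ ≠ ff i₂ := by
  rintro ⟨i1, i2, i3, i4, h12, h23, h34, hap1, hap2, hne⟩
  have hk12 : bIdx i1 ≤ bIdx i2 := bIdx_mono h12.le
  have hk23 : bIdx i2 ≤ bIdx i3 := bIdx_mono h23.le
  have hk34 : bIdx i3 ≤ bIdx i4 := bIdx_mono h34.le
  have hm1 := ff_mem i1
  have hm2 := ff_mem i2
  have hm3 := ff_mem i3
  have hm4 := ff_mem i4
  have hc1 := cc_pos (bIdx i1)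
  rcases Nat.lt_or_ge (ff i2) (ff i1) with hd | hd
  · -- decreasing AP: all four values in one block
    have hv3 : ff i3 < ff i2 := by omega
    have hv4 : ff i4 < ff i3 := by omega
    have hk : bIdx i1 = bIdx i4 := by
      by_contra hcon
      have hlt : bIdx i1 < bIdx i4 := by omega
      have := end_le_start hlt
      omega
    have hb2 : bIdx i2 = bIdx i1 := by omega
    have hb3 : bIdx i3 = bIdx i1 := by omega
    exact no_inblock_AP rfl hb2 hb3 h12 h23 hap1 hne
  · -- increasing AP
    have hd' : ff i1 < ff i2 := by omega
    have hv3 : ff i2 < ff i3 := by omega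
    have hv4 : ff i3 < ff i4 := by omega
    -- step 1 : bIdx i2 = bIdx i3
    have hk2 : bIdx i2 = bIdx i3 := by
      by_contra hcon
      have hlt : bIdx i2 < bIdx i3 := by omega
      have hstep : cc (bIdx i2 + 1) ≤ cc (bIdx i3) :=
        cc_strictMono.monotone (by omega)
      rw [cc_succ] at hstep
      omega
    -- step 2 : bIdx i4 = bIdx i3
    have hk4 : bIdx i3 = bIdx i4 := by
      by_contra hcon
      have hlt : bIdx i3 < bIdx i4 := by omega
      have hstep : cc (bIdx i2 + 1) ≤ cc (bIdx i4) :=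
        cc_strictMono.monotone (by omega)
      rw [cc_succ] at hstep
      rw [← hk2] at hm3
      have hc2 := cc_pos (bIdx i2)
      omega
    have hne2 : ff i2 ≠ ff i3 := by omega
    exact no_inblock_AP (k := bIdx i2) rfl hk2.symm (by omega) h23 h34 hap2 hne2

/-! ### Density -/

lemma u_le_one (S : Set ℕ) (n : ℕ) :
    (Nat.card ↥(S ∩ Set.Icc 1 n) : ℝ) / n ≤ 1 := by
  rcases Nat.eq_zero_or_pos n with rfl | hn
  · simp
  · have h1 : Nat.card ↥(S ∩ Set.Icc 1 n) ≤ Nat.card ↥(Set.Icc 1 n) := by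
      rw [Nat.card_coe_set_eq, Nat.card_coe_set_eq]
      exact Set.ncard_le_ncard Set.inter_subset_right (Set.finite_Icc 1 n)
    have h2 : Nat.card ↥(Set.Icc 1 n) = n := by
      rw [Nat.card_coe_set_eq, ← Finset.coe_Icc, Set.ncard_coe_finset, Nat.card_Icc]
      omega
    have hn' : (0:ℝ) < n := by exact_mod_cast hn
    rw [div_le_one hn']
    exact_mod_cast h1.trans_eq h2

lemma u_nonneg (S : Set ℕ) (n : ℕ) :
    (0:ℝ) ≤ (Nat.card ↥(S ∩ Set.Icc 1 n) : ℝ) / n := by positivity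

theorem upperDensity_le_one (S : Set ℕ) : upperDensity S ≤ 1 := by
  apply Filter.limsup_le_of_le
  · exact Filter.isCoboundedUnder_le_of_le atTop (x := 0) (u_nonneg S)
  · exact Filter.Eventually.of_forall (u_le_one S)

theorem upperDensity_SS : upperDensity SS = 1 := by
  refine le_antisymm (upperDensity_le_one SS) ?_
  apply le_of_forall_lt
  intro c hc
  -- pick a' strictly between c and 1
  set a' : ℝ := (c + 1) / 2 with ha'
  have hca : c < a' := by rw [ha']; linarith
  have ha1 : a' < 1 := by rw [ha']; linarith
  refine lt_of_lt_of_le hca ?_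
  apply Filter.le_limsup_of_frequently_le _ (Filter.isBoundedUnder_of ⟨1, u_le_one SS⟩)
  rw [Filter.frequently_atTop]
  intro N
  obtain ⟨k0, hk0⟩ := exists_nat_gt (1 / (1 - a'))
  set k := max N k0 with hk
  set n := cc k + Lb k - 1 with hn
  have hccge := cc_ge k
  have hLb := Lb_pos k
  have hccpos := cc_pos k
  have hn1 : n + 1 = cc k + Lb k := by omega
  refine ⟨n, by omega, ?_⟩
  -- the block k is contained in SS ∩ Icc 1 n
  have hsub : Set.Ico (cc k) (cc k + Lb k) ⊆ SS ∩ Set.Icc 1 n := by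
    intro v hv
    rw [Set.mem_Ico] at hv
    exact ⟨Set.mem_iUnion.mpr ⟨k, Set.mem_Ico.mpr hv⟩, Set.mem_Icc.mpr ⟨by omega, by omega⟩⟩
  have hfin : (SS ∩ Set.Icc 1 n).Finite := (Set.finite_Icc 1 n).subset Set.inter_subset_right
  have hcard : Lb k ≤ Nat.card ↥(SS ∩ Set.Icc 1 n) := by
    have h1 : Nat.card ↥(Set.Ico (cc k) (cc k + Lb k)) = Lb k := by
      rw [Nat.card_coe_set_eq, ← Finset.coe_Ico, Set.ncard_coe_finset, Nat.card_Ico]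
      omega
    rw [Nat.card_coe_set_eq, ← h1, Nat.card_coe_set_eq]
    exact Set.ncard_le_ncard hsub hfin
  -- real estimates
  have hLbig : k * cc k ≤ Lb k := by
    have := Lb_big k
    nlinarith
  have hnR : (n:ℝ) + 1 = (cc k:ℝ) + (Lb k:ℝ) := by exact_mod_cast hn1
  have hnpos : (0:ℝ) < n := by
    have : 1 ≤ n := by omega
    exact_mod_cast this
  have hkk0 : (k0:ℝ) ≤ (k:ℝ) + 1 := by
    have : k0 ≤ k := le_max_right N k0
    exact_mod_cast Nat.le_succ_of_le this
  have hk0pos : (0:ℝ) < k0 := by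
    have h0 : (0:ℝ) < 1 / (1 - a') := by
      apply div_pos one_pos; linarith
    linarith
  have hfrac : 1 < (1 - a') * ((k:ℝ) + 1) := by
    have h1 : 1 / (1 - a') < k0 := hk0
    have h2 : (0:ℝ) < 1 - a' := by linarith
    rw [div_lt_iff₀ h2] at h1
    nlinarith
  have step1 : a' ≤ (k:ℝ) / ((k:ℝ) + 1) := by
    rw [le_div_iff₀ (by positivity)]
    nlinarith
  have step2 : (k:ℝ) / ((k:ℝ) + 1) ≤ (Lb k:ℝ) / ((cc k:ℝ) + (Lb k:ℝ)) := by
    have hLc : (k:ℝ) * (cc k:ℝ) ≤ (Lb k:ℝ) := by exact_mod_cast hLbig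
    have hccR : (1:ℝ) ≤ (cc k:ℝ) := by exact_mod_cast hccpos
    have hLbR : (1:ℝ) ≤ (Lb k:ℝ) := by exact_mod_cast hLb
    rw [div_le_div_iff₀ (by positivity) (by positivity)]
    nlinarith
  have step3 : (Lb k:ℝ) / ((cc k:ℝ) + (Lb k:ℝ)) ≤
      (Nat.card ↥(SS ∩ Set.Icc 1 n) : ℝ) / n := by
    apply div_le_div₀ (by positivity) (by exact_mod_cast hcard) hnpos (by rw [← hnR]; linarith)
  linarith

theorem alpha_four_eq_one :
    (∀ ε : ℝ, 0 < ε → ∃ S : Set ℕ, 0 ∉ S ∧ FourFree S ∧ 1 - ε < upperDensity S) ∧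
    sSup {x : ℝ | ∃ S : Set ℕ, 0 ∉ S ∧ FourFree S ∧ upperDensity S = x} = 1 := by
  have hzero : 0 ∉ SS := by
    intro h
    rw [SS, Set.mem_iUnion] at h
    obtain ⟨k, hk⟩ := h
    rw [Set.mem_Ico] at hk
    have := cc_pos k
    omega
  have hfour : FourFree SS := ⟨ff, ff_perm, ff_noAP⟩
  have h1mem : (1:ℝ) ∈ {x : ℝ | ∃ S : Set ℕ, 0 ∉ S ∧ FourFree S ∧ upperDensity S = x} :=
    ⟨SS, hzero, hfour, upperDensity_SS⟩
  have hub : ∀ x ∈ {x : ℝ | ∃ S : Set ℕ, 0 ∉ S ∧ FourFree S ∧ upperDensity S = x}, x ≤ 1 := by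
    rintro x ⟨S, -, -, rfl⟩
    exact upperDensity_le_one S
  constructor
  · intro ε hε
    exact ⟨SS, hzero, hfour, by rw [upperDensity_SS]; linarith⟩
  · exact le_antisymm (csSup_le ⟨1, h1mem⟩ hub) (le_csSup ⟨1, hub⟩ h1mem)
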